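/- The polynomials P_λ satisfy the recursion formulae: if λ1 ≥ 1 then P_λ(s,t) = P_{λ+(−1,0)}(s,t) − s·t·P_{λ+(−1,−1)}(s,t) − t·P_{λ+(−2,1)}(s,t), and if λ2 ≥ 1 then P_λ(s,t) = P_{λ+(0,−1)}(s,t) − s·t·P_{λ+(−1,−1)}(s,t) − s·P_{λ+(1,−2)}(s,t), where by convention P_μ = 0 whenever μ ∉ ℕ₀². Moreover P_{(λ1,λ2)}(t,s) = P_{(λ2,λ1)}(s,t) for all λ ∈ ℕ₀². -/

import Mathlib

set_option synthInstance.maxHeartbeats 1000000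
set_option maxHeartbeats 1000000


open MvPolynomial

noncomputable section

abbrev Rxy : Type := MvPolynomial (Fin 2) ℤ

/-- The fraction field of ℤ[x,y]. -/
abbrev Kxy : Type := FractionRing Rxy

/-- The image of `x` in the fraction field. -/
noncomputable def xx : Kxy := algebraMap Rxy Kxy (X 0)

/-- The image of `y` in the fraction field. -/
noncomputable def yy : Kxy := algebraMap Rxy Kxy (X 1)

/-- `s = x / y²`. -/
noncomputable def sv : Kxy := xx / yy ^ 2

/-- `t = y / x²`. -/
noncomputable def tv : Kxy := yy / xx ^ 2

/-- Evaluation of a two-variable integer polynomial at `(s, t)` in the fraction field. -/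
noncomputable def evST (p : Rxy) : Kxy := aeval ![sv, tv] p

lemma algMap_inj : Function.Injective (algebraMap Rxy Kxy) :=
  IsFractionRing.injective Rxy Kxy

lemma xx_ne : xx ≠ 0 := by
  simpa [xx, map_eq_zero_iff _ algMap_inj] using X_ne_zero (R := ℤ) (0 : Fin 2)

lemma yy_ne : yy ≠ 0 := by
  simpa [yy, map_eq_zero_iff _ algMap_inj] using X_ne_zero (R := ℤ) (1 : Fin 2)

lemma evST_zero (p : Rxy) (h : evST p = 0) : p = 0 := by
  set N := p.totalDegree with hN
  have hbound : ∀ d ∈ p.support, d 0 ≤ N ∧ d 1 ≤ N := by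
    intro d hd
    have h1 : (d.sum fun _ e => e) ≤ N := le_totalDegree hd
    rw [Finsupp.sum_fintype _ _ (fun _ => rfl), Fin.sum_univ_two] at h1
    omega
  set m : (Fin 2 →₀ ℕ) → (Fin 2 →₀ ℕ) := fun d =>
    Finsupp.single 0 (2*N + d 0 - 2*d 1) + Finsupp.single 1 (2*N + d 1 - 2*d 0) with hm
  have hm0 : ∀ d, m d 0 = 2*N + d 0 - 2*d 1 := by
    intro d; simp [hm, Finsupp.single_apply]
  have hm1 : ∀ d, m d 1 = 2*N + d 1 - 2*d 0 := by
    intro d; simp [hm, Finsupp.single_apply]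
  have hminj : ∀ d ∈ p.support, ∀ d' ∈ p.support, m d = m d' → d = d' := by
    intro d hd d' hd' h
    obtain ⟨h01, h02⟩ := hbound d hd
    obtain ⟨h11, h12⟩ := hbound d' hd'
    have e0 : m d 0 = m d' 0 := by rw [h]
    have e1 : m d 1 = m d' 1 := by rw [h]
    rw [hm0, hm0] at e0; rw [hm1, hm1] at e1
    ext i
    fin_cases i <;> simp <;> omega
  set q : Rxy := ∑ d ∈ p.support, monomial (m d) (p.coeff d) with hq
  have key : algebraMap Rxy Kxy q = (xx*yy)^(2*N) * evST p := by
    rw [evST]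
    conv_rhs => rw [p.as_sum]
    rw [hq, map_sum, map_sum, Finset.mul_sum]
    apply Finset.sum_congr rfl
    intro d hd
    obtain ⟨hi, hj⟩ := hbound d hd
    rw [aeval_monomial, monomial_eq, map_mul]
    rw [Finsupp.prod_fintype _ _ (fun _ => pow_zero _),
        Finsupp.prod_fintype _ _ (fun _ => pow_zero _), Fin.prod_univ_two, Fin.prod_univ_two]
    rw [map_mul, map_pow, map_pow]
    simp only [Matrix.cons_val_zero, Matrix.cons_val_one, Matrix.head_cons]
    rw [hm0, hm1]
    set i := d 0
    set j := d 1
    have hC : (algebraMap Rxy Kxy) (C (p.coeff d)) = algebraMap ℤ Kxy (p.coeff d) := by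
      rw [show (C (p.coeff d) : Rxy) = algebraMap ℤ Rxy (p.coeff d) from rfl,
        ← IsScalarTower.algebraMap_apply]
    rw [hC]
    rw [show (algebraMap Rxy Kxy) (X 0) = xx from rfl, show (algebraMap Rxy Kxy) (X 1) = yy from rfl]
    rw [sv, tv, div_pow, div_pow, ← pow_mul, ← pow_mul]
    have e1 : xx ^ (2*N + i - 2*j) * xx ^ (2*j) = xx ^ (2*N) * xx ^ i := by
      rw [← pow_add, ← pow_add]; congr 1; omega
    have e2 : yy ^ (2*N + j - 2*i) * yy ^ (2*i) = yy ^ (2*N) * yy ^ j := by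
      rw [← pow_add, ← pow_add]; congr 1; omega
    have hxne : xx ^ (2*j) ≠ 0 := pow_ne_zero _ xx_ne
    have hyne : yy ^ (2*i) ≠ 0 := pow_ne_zero _ yy_ne
    rw [div_mul_div_comm, ← mul_div_assoc, ← mul_div_assoc,
      eq_div_iff (mul_ne_zero hyne hxne), mul_pow]
    linear_combination (algebraMap ℤ Kxy (p.coeff d)) * (yy ^ (2*N+j-2*i) * yy ^ (2*i)) * e1
      + (algebraMap ℤ Kxy (p.coeff d)) * (xx ^ (2*N) * xx ^ i) * e2
  rw [h, mul_zero] at key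
  have hq0 : q = 0 := algMap_inj (by rw [key]; simp)
  by_contra hp
  obtain ⟨d, hd⟩ := support_nonempty.mpr hp
  have : coeff (m d) q = p.coeff d := by
    rw [hq, coeff_sum]
    rw [Finset.sum_eq_single d]
    · rw [coeff_monomial, if_pos rfl]
    · intro d' hd' hne
      rw [coeff_monomial, if_neg]
      intro hcontra
      exact hne (hminj d' hd' d hd hcontra)
    · intro hcontra; exact absurd hd hcontra
  rw [hq0] at this
  simp at this
  exact (mem_support_iff.mp hd) this.symm

lemma evST_injective : Function.Injective evST := by
  intro p q h
  have h2 : evST (p - q) = 0 := by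
    unfold evST at *; rw [map_sub, h, sub_self]
  exact sub_eq_zero.mp (evST_zero _ h2)

lemma svtv : sv * tv = 1 / (xx * yy) := by
  rw [sv, tv]; field_simp [xx_ne, yy_ne]

lemma helper1 {K : Type*} [Field K] (x y A B q1 q2 q3 q4 : K) (hx : x ≠ 0) (hy : y ≠ 0)
    (hA : A ≠ 0) (hB : B ≠ 0) (hrec : x * q2 = q1 + q3 + q4) :
    q1/(A*B) = q2/((A/x)*B) - (x/y^2)*(y/x^2)*(q3/((A/x)*(B/y))) - (y/x^2)*(q4/((A/x^2)*(B*y))) := by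
  have e1 : q2/((A/x)*B) = (x*q2)/(A*B) := by
    rw [div_mul_eq_mul_div, div_div_eq_mul_div]; ring
  have e2 : (x/y^2)*(y/x^2)*(q3/((A/x)*(B/y))) = q3/(A*B) := by
    field_simp
  have e3 : (y/x^2)*(q4/((A/x^2)*(B*y))) = q4/(A*B) := by
    field_simp
  rw [e1, e2, e3, div_sub_div_same, div_sub_div_same]
  congr 1
  linear_combination (-1 : K) * hrec

lemma helper2 {K : Type*} [Field K] (x y A B q1 q2 q3 q4 : K) (hx : x ≠ 0) (hy : y ≠ 0)
    (hA : A ≠ 0) (hB : B ≠ 0) (hrec : y * q2 = q1 + q3 + q4) :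
    q1/(A*B) = q2/(A*(B/y)) - (x/y^2)*(y/x^2)*(q3/((A/x)*(B/y))) - (x/y^2)*(q4/((A*x)*(B/y^2))) := by
  have e1 : q2/(A*(B/y)) = (y*q2)/(A*B) := by
    rw [mul_div_assoc', div_div_eq_mul_div]; ring
  have e2 : (x/y^2)*(y/x^2)*(q3/((A/x)*(B/y))) = q3/(A*B) := by
    field_simp
  have e3 : (x/y^2)*(q4/((A*x)*(B/y^2))) = q4/(A*B) := by
    field_simp
  rw [e1, e2, e3, div_sub_div_same, div_sub_div_same]
  congr 1
  linear_combination (-1 : K) * hrec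

def swh : Rxy →+* Kxy :=
  (algebraMap Rxy Kxy).comp (rename (Equiv.swap (0 : Fin 2) 1)).toRingHom

lemma swh_inj : Function.Injective swh :=
  algMap_inj.comp (rename_injective _ (Equiv.injective _))

def S : Kxy →+* Kxy := IsFractionRing.lift swh_inj

lemma S_alg (p : Rxy) : S (algebraMap Rxy Kxy p)
    = algebraMap Rxy Kxy (rename (Equiv.swap (0 : Fin 2) 1) p) :=
  IsFractionRing.lift_algebraMap swh_inj p

lemma S_xx : S xx = yy := by
  rw [xx, S_alg, rename_X, Equiv.swap_apply_left]; rfl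

lemma S_yy : S yy = xx := by
  rw [yy, S_alg, rename_X, Equiv.swap_apply_right]; rfl

lemma S_sv : S sv = tv := by rw [sv, tv, map_div₀, map_pow, S_xx, S_yy]

lemma S_tv : S tv = sv := by rw [sv, tv, map_div₀, map_pow, S_xx, S_yy]

noncomputable def SA : Kxy →ₐ[ℤ] Kxy :=
  { toRingHom := S, commutes' := fun n => by simp [algebraMap_int_eq] }

lemma SA_apply (k : Kxy) : SA k = S k := rfl

lemma evST_swap (p : Rxy) :
    evST (rename (Equiv.swap (0 : Fin 2) 1) p) = S (evST p) := by
  unfold evST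
  rw [aeval_rename]
  rw [show S ((aeval ![sv, tv]) p) = SA ((aeval ![sv, tv]) p) from rfl,
    comp_aeval_apply (f := ![sv, tv]) SA p]
  have h2 : (![sv, tv] ∘ ⇑(Equiv.swap (0:Fin 2) 1)) = (fun i => SA (![sv, tv] i)) := by
    funext i
    fin_cases i
    · simpa [SA_apply, Equiv.swap_apply_left] using S_sv.symm
    · simpa [SA_apply, Equiv.swap_apply_right] using S_tv.symm
  rw [h2]

/-- Defining properties of the SU(3) character polynomials `Q a b`
(with the convention `Q a b = 0` whenever `(a, b) ∉ ℕ₀²`). -/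
def IsQSU3 (Q : ℤ → ℤ → Rxy) : Prop :=
  (∀ a b : ℤ, (a < 0 ∨ b < 0) → Q a b = 0) ∧
  Q 0 0 = 1 ∧
  Q 1 0 = X 0 ∧
  (∀ a b : ℤ, 0 ≤ a → 0 ≤ b →
    X 0 * Q a b = Q (a + 1) b + Q a (b - 1) + Q (a - 1) (b + 1)) ∧
  (∀ a b : ℤ, rename (Equiv.swap (0 : Fin 2) 1) (Q a b) = Q b a)

/-- Defining property of the polynomials `P a b` (in the variables `s, t`), namely
`P_λ(x/y², y/x²) = x^{-λ₁} y^{-λ₂} Q_λ(x,y)` in the fraction field of ℤ[x,y]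
(with the convention `P a b = 0` whenever `(a, b) ∉ ℕ₀²`). -/
def IsPSU3 (Q P : ℤ → ℤ → Rxy) : Prop :=
  (∀ a b : ℤ, (a < 0 ∨ b < 0) → P a b = 0) ∧
  (∀ a b : ℤ, 0 ≤ a → 0 ≤ b →
    evST (P a b) = algebraMap Rxy Kxy (Q a b) / (xx ^ a * yy ^ b))

theorem stmt_3 (Q P : ℤ → ℤ → Rxy) (hQ : IsQSU3 Q) (hP : IsPSU3 Q P) :
    (∀ a b : ℤ, 1 ≤ a → 0 ≤ b →
      P a b = P (a - 1) b - X 0 * X 1 * P (a - 1) (b - 1) - X 1 * P (a - 2) (b + 1)) ∧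
    (∀ a b : ℤ, 0 ≤ a → 1 ≤ b →
      P a b = P a (b - 1) - X 0 * X 1 * P (a - 1) (b - 1) - X 0 * P (a + 1) (b - 2)) ∧
    (∀ a b : ℤ, 0 ≤ a → 0 ≤ b →
      rename (Equiv.swap (0 : Fin 2) 1) (P a b) = P b a) := by
  obtain ⟨hQ0, hQ00, hQ10, hQrec, hQsym⟩ := hQ
  obtain ⟨hP0, hPev⟩ := hP
  have hP' : ∀ a b : ℤ, evST (P a b) = algebraMap Rxy Kxy (Q a b) / (xx ^ a * yy ^ b) := by
    intro a b
    rcases lt_or_ge a 0 with ha | ha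
    · rw [hP0 a b (Or.inl ha), hQ0 a b (Or.inl ha)]; simp [evST]
    rcases lt_or_ge b 0 with hb | hb
    · rw [hP0 a b (Or.inr hb), hQ0 a b (Or.inr hb)]; simp [evST]
    · exact hPev a b ha hb
  refine ⟨?_, ?_, ?_⟩
  · intro a b ha hb
    apply evST_injective
    have expand : evST (P (a-1) b - X 0 * X 1 * P (a-1) (b-1) - X 1 * P (a-2) (b+1))
        = evST (P (a-1) b) - sv * tv * evST (P (a-1) (b-1)) - tv * evST (P (a-2) (b+1)) := by
      unfold evST; simp
    rw [expand, hP', hP', hP', hP']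
    have hrec := hQrec (a-1) b (by omega) hb
    rw [show a-1+1 = a by ring, show a-1-1 = a-2 by ring] at hrec
    have hrecK := congrArg (algebraMap Rxy Kxy) hrec
    simp only [map_mul, map_add] at hrecK
    have za1 : xx ^ (a-1) = xx ^ a / xx := by rw [zpow_sub₀ xx_ne, zpow_one]
    have za2 : xx ^ (a-2) = xx ^ a / xx ^ 2 := by
      rw [zpow_sub₀ xx_ne, show ((2:ℤ)) = ((2:ℕ):ℤ) by norm_num, zpow_natCast]
    have zb1 : yy ^ (b-1) = yy ^ b / yy := by rw [zpow_sub₀ yy_ne, zpow_one]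
    have zb2 : yy ^ (b+1) = yy ^ b * yy := by rw [zpow_add_one₀ yy_ne]
    rw [za1, za2, zb1, zb2, sv, tv]
    exact helper1 xx yy (xx ^ a) (yy ^ b) _ _ _ _ xx_ne yy_ne
      (zpow_ne_zero _ xx_ne) (zpow_ne_zero _ yy_ne) hrecK
  · intro a b ha hb
    apply evST_injective
    have expand : evST (P a (b-1) - X 0 * X 1 * P (a-1) (b-1) - X 0 * P (a+1) (b-2))
        = evST (P a (b-1)) - sv * tv * evST (P (a-1) (b-1)) - sv * evST (P (a+1) (b-2)) := by
      unfold evST; simp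
    rw [expand, hP', hP', hP', hP']
    have hrec := hQrec (b-1) a (by omega) ha
    rw [show b-1+1 = b by ring, show b-1-1 = b-2 by ring] at hrec
    have h2 := congrArg (rename (Equiv.swap (0:Fin 2) 1)) hrec
    simp only [map_mul, map_add, rename_X, Equiv.swap_apply_left, hQsym] at h2
    have hrecK := congrArg (algebraMap Rxy Kxy) h2
    simp only [map_mul, map_add] at hrecK
    have za1 : xx ^ (a-1) = xx ^ a / xx := by rw [zpow_sub₀ xx_ne, zpow_one]
    have za2 : xx ^ (a+1) = xx ^ a * xx := by rw [zpow_add_one₀ xx_ne]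
    have zb1 : yy ^ (b-1) = yy ^ b / yy := by rw [zpow_sub₀ yy_ne, zpow_one]
    have zb2 : yy ^ (b-2) = yy ^ b / yy ^ 2 := by
      rw [zpow_sub₀ yy_ne, show ((2:ℤ)) = ((2:ℕ):ℤ) by norm_num, zpow_natCast]
    rw [za1, za2, zb1, zb2, sv, tv]
    exact helper2 xx yy (xx ^ a) (yy ^ b) _ _ _ _ xx_ne yy_ne
      (zpow_ne_zero _ xx_ne) (zpow_ne_zero _ yy_ne) hrecK
  · intro a b ha hb
    apply evST_injective
    rw [evST_swap, hP', hP', map_div₀, map_mul, map_zpow₀, map_zpow₀, S_xx, S_yy,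
      S_alg, hQsym, mul_comm]
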